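/- For every positive integer m, the matrices X_m^+, X_m^-, O_m^+, O_m^- defined by the block recursion are exactly the state matrices of suitably connected (m,1)-mosaics: the (i,j)-entry of X_m^+ (resp. X_m^-, O_m^+, O_m^-) equals the number of suitably connected (m,1)-mosaics with i-th l-state, j-th r-state, and with (b-state, t-state) equal to (no connection point, no connection point) (resp. (no, yes), (yes, yes), (yes, no)). -/

import Mathlib

/-- Connection point on the left edge, for each of the eleven mosaic tiles `T_0, …, T_10`. -/
def cpL : Fin 11 → Bool := ![false, true, false, false, true, true, false, true, true, true, true]
/-- Connection point on the right edge. -/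
def cpR : Fin 11 → Bool := ![false, false, true, true, false, true, false, true, true, true, true]
/-- Connection point on the top edge. -/
def cpT : Fin 11 → Bool := ![false, false, false, true, true, false, true, true, true, true, true]
/-- Connection point on the bottom edge. -/
def cpB : Fin 11 → Bool := ![false, true, true, false, false, false, true, true, true, true, true]

/-- An `(m,n)`-mosaic: an `m × n` matrix of mosaic tiles (row `i`, column `j`). -/
abbrev Mosaic (m n : ℕ) := Fin m → Fin n → Fin 11

/-- Suitably connected: contiguous tiles agree about connection points on their common edge. -/
def SuitablyConnected {m n : ℕ} (M : Mosaic m n) : Prop :=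
  (∀ (i : Fin m) (j : Fin n) (h : j.val + 1 < n),
      cpR (M i j) = cpL (M i ⟨j.val + 1, h⟩)) ∧
  (∀ (i : Fin m) (h : i.val + 1 < m) (j : Fin n),
      cpB (M i j) = cpT (M ⟨i.val + 1, h⟩ j))

/-- Suitably ∂-connected: tiles on opposite ends of a row (resp. column) agree about
connection points on the outer boundary edges. -/
def SuitablyBdryConnected {m n : ℕ} (M : Mosaic m n) : Prop :=
  (∀ (i : Fin m) (j j' : Fin n), j.val = 0 → j'.val = n - 1 →
      cpL (M i j) = cpR (M i j')) ∧
  (∀ (i i' : Fin m) (j : Fin n), i.val = 0 → i'.val = m - 1 →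
      cpT (M i j) = cpB (M i' j))

/-- A period knot `(m,n)`-mosaic. -/
def PeriodKnot {m n : ℕ} (M : Mosaic m n) : Prop :=
  SuitablyConnected M ∧ SuitablyBdryConnected M

/-- `D_P^{(m,n)}`, the number of period knot `(m,n)`-mosaics. -/
noncomputable def DP (m n : ℕ) : ℕ := Nat.card {M : Mosaic m n // PeriodKnot M}

/-- No connection points on the boundary of the mosaic. -/
def BoundaryFree {m n : ℕ} (M : Mosaic m n) : Prop :=
  ∀ (i : Fin m) (j : Fin n),
    (j.val = 0 → cpL (M i j) = false) ∧ (j.val = n - 1 → cpR (M i j) = false) ∧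
    (i.val = 0 → cpT (M i j) = false) ∧ (i.val = m - 1 → cpB (M i j) = false)

/-- `D^{(m,n)}`, the number of knot `(m,n)`-mosaics. -/
noncomputable def DK (m n : ℕ) : ℕ :=
  Nat.card {M : Mosaic m n // SuitablyConnected M ∧ BoundaryFree M}

/-- Subtract `x` from the index `i`, modulo `m`. -/
def shiftIdx {m : ℕ} (x : ℤ) (i : Fin m) : Fin m :=
  ⟨(((i : ℤ) - x) % (m : ℤ)).toNat, by
    have hm : (0 : ℤ) < (m : ℤ) := by exact_mod_cast i.pos
    have h1 := Int.emod_lt_of_pos ((i : ℤ) - x) hm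
    have h2 := Int.emod_nonneg ((i : ℤ) - x) (by omega : (m : ℤ) ≠ 0)
    omega⟩

/-- The cyclic rotation `t_{x,y}`: `(t_{x,y} M)_{i,j} = M_{i-x, j-y}` (indices mod `m`, `n`). -/
def tshift {m n : ℕ} (x y : ℤ) (M : Mosaic m n) : Mosaic m n :=
  fun i j => M (shiftIdx x i) (shiftIdx y j)

/-- `M` is a `(p,q)`-f.period mosaic: `p` is the least positive integer with `M = t_{p,0}(M)`
and `q` is the least positive integer with `M = t_{0,q}(M)`. -/
def IsFPeriod {m n : ℕ} (p q : ℕ) (M : Mosaic m n) : Prop :=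
  IsLeast {a : ℕ | 0 < a ∧ M = tshift (a : ℤ) 0 M} p ∧
  IsLeast {b : ℕ | 0 < b ∧ M = tshift 0 (b : ℤ) M} q

/-- `d_{p,q}`: the number of `(p,q)`-f.period knot `(m,n)`-mosaics. -/
noncomputable def dFP (m n p q : ℕ) : ℕ :=
  Nat.card {M : Mosaic m n // PeriodKnot M ∧ IsFPeriod p q M}

/-- Equivalence of period knot mosaics under cyclic rotations of rows and columns. -/
def torRel (m n : ℕ) (A B : {M : Mosaic m n // PeriodKnot M}) : Prop :=
  ∃ x y : ℤ, tshift x y A.val = B.val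

/-- `D_T^{(m,n)}`, the number of toroidal knot `(m,n)`-mosaics. -/
noncomputable def DT (m n : ℕ) : ℕ := Nat.card (Quot (torRel m n))

/-- `M` is a `p_{(k,1)}`-f.period knot `(p,p)`-mosaic: not `(1,1)`-f.period and `M = t_{k,1}(M)`. -/
def IsPk1FPeriod {p : ℕ} (k : ℕ) (M : Mosaic p p) : Prop :=
  ¬ IsFPeriod 1 1 M ∧ M = tshift (k : ℤ) 1 M

/-- `d_{p_{(k,1)}}`: the number of `p_{(k,1)}`-f.period knot `(p,p)`-mosaics. -/
noncomputable def dPk (p k : ℕ) : ℕ :=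
  Nat.card {M : Mosaic p p // PeriodKnot M ∧ IsPk1FPeriod k M}

/-- `d_{p²}`: the number of period knot `(p,p)`-mosaics that are not `(1,1)`-, not `(1,p)`-
and not `p_{(k,1)}`-f.period for any `k`. -/
noncomputable def dPsq (p : ℕ) : ℕ :=
  Nat.card {M : Mosaic p p // PeriodKnot M ∧ ¬ IsFPeriod 1 1 M ∧ ¬ IsFPeriod 1 p M ∧
    ∀ k < p, ¬ IsPk1FPeriod k M}

/-- Entries of the pair `(X_k, O_k)` of `2^k × 2^k` matrices defined by the block recursion
`X_{k+1} = [[X_k, O_k], [O_k, X_k]]`, `O_{k+1} = [[O_k, X_k], [X_k, 4 O_k]]`,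
seeded with `X_0 = O_0 = [1]` (the most significant bit selects the block). -/
def matsXO : ℕ → ℕ → ℕ → ℕ × ℕ
  | 0, _, _ => (1, 1)
  | k + 1, i, j =>
    let v := matsXO k (i % 2 ^ k) (j % 2 ^ k)
    if i / 2 ^ k % 2 = 0 then
      if j / 2 ^ k % 2 = 0 then (v.1, v.2) else (v.2, v.1)
    else
      if j / 2 ^ k % 2 = 0 then (v.2, v.1) else (v.1, 4 * v.2)

/-- The matrix `X_k`. -/
def Xmat (m : ℕ) : Matrix (Fin (2 ^ m)) (Fin (2 ^ m)) ℕ :=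
  Matrix.of fun i j => (matsXO m i j).1

/-- The matrix `O_k`. -/
def Omat (m : ℕ) : Matrix (Fin (2 ^ m)) (Fin (2 ^ m)) ℕ :=
  Matrix.of fun i j => (matsXO m i j).2

/-- Entries of the quadruple `(X_k^+, X_k^-, O_k^+, O_k^-)` of `2^k × 2^k` matrices defined by
the block recursions `X_{k+1}^+ = [[X_k^+, O_k^-],[O_k^-, X_k^+]]`,
`X_{k+1}^- = [[X_k^-, O_k^+],[O_k^+, X_k^-]]`, `O_{k+1}^+ = [[O_k^+, X_k^-],[X_k^-, 4 O_k^+]]`,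
`O_{k+1}^- = [[O_k^-, X_k^+],[X_k^+, 4 O_k^-]]`, seeded with `X_0^+ = O_0^+ = [1]`,
`X_0^- = O_0^- = [0]` (the most significant bit selects the block). -/
def matsPM : ℕ → ℕ → ℕ → ℕ × ℕ × ℕ × ℕ
  | 0, _, _ => (1, 0, 1, 0)
  | k + 1, i, j =>
    let v := matsPM k (i % 2 ^ k) (j % 2 ^ k)
    match v with
    | (xp, xm, op, om) =>
      if i / 2 ^ k % 2 = 0 then
        if j / 2 ^ k % 2 = 0 then (xp, xm, op, om) else (om, op, xm, xp)
      else
        if j / 2 ^ k % 2 = 0 then (om, op, xm, xp) else (xp, xm, 4 * op, 4 * om)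

/-- The matrix `X_m^+`. -/
def Xplus (m : ℕ) : Matrix (Fin (2 ^ m)) (Fin (2 ^ m)) ℕ :=
  Matrix.of fun i j => (matsPM m i j).1
/-- The matrix `X_m^-`. -/
def Xminus (m : ℕ) : Matrix (Fin (2 ^ m)) (Fin (2 ^ m)) ℕ :=
  Matrix.of fun i j => (matsPM m i j).2.1
/-- The matrix `O_m^+`. -/
def Oplus (m : ℕ) : Matrix (Fin (2 ^ m)) (Fin (2 ^ m)) ℕ :=
  Matrix.of fun i j => (matsPM m i j).2.2.1
/-- The matrix `O_m^-`. -/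
def Ominus (m : ℕ) : Matrix (Fin (2 ^ m)) (Fin (2 ^ m)) ℕ :=
  Matrix.of fun i j => (matsPM m i j).2.2.2

/-- The boundary state (a word in `{o,x}^m`) encoded by `a : Fin (2^m)` in reverse
lexicographic order: the first position is the least significant bit. -/
def stateOf {m : ℕ} (a : Fin (2 ^ m)) : Fin m → Bool := fun r => (a : ℕ).testBit r.val

/-- The `l`-state of a mosaic. -/
def lState {m n : ℕ} (hn : 0 < n) (M : Mosaic m n) : Fin m → Bool :=
  fun i => cpL (M i ⟨0, hn⟩)
/-- The `r`-state of a mosaic. -/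
def rState {m n : ℕ} (hn : 0 < n) (M : Mosaic m n) : Fin m → Bool :=
  fun i => cpR (M i ⟨n - 1, Nat.sub_lt hn Nat.one_pos⟩)
/-- The `t`-state of a mosaic. -/
def tState {m n : ℕ} (hm : 0 < m) (M : Mosaic m n) : Fin n → Bool :=
  fun j => cpT (M ⟨0, hm⟩ j)
/-- The `b`-state of a mosaic. -/
def bState {m n : ℕ} (hm : 0 < m) (M : Mosaic m n) : Fin n → Bool :=
  fun j => cpB (M ⟨m - 1, Nat.sub_lt hm Nat.one_pos⟩ j)

/-- The state matrix `N^{(m,n)+}`: its `(a,b)` entry counts the suitably connected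
`(m,n)`-mosaics whose `t`-state equals its `b`-state, whose `l`-state is the `a`-th state
and whose `r`-state is the `b`-th state. -/
noncomputable def Nplus (m n : ℕ) (hm : 0 < m) (hn : 0 < n) :
    Matrix (Fin (2 ^ m)) (Fin (2 ^ m)) ℕ :=
  Matrix.of fun a b => Nat.card {M : Mosaic m n // SuitablyConnected M ∧
    tState hm M = bState hm M ∧ lState hn M = stateOf a ∧ rState hn M = stateOf b}

/-- The index map `α` for `tr^{(k)}`: cyclic shift by `k` positions of the `p`-bit binary
representation, i.e. `α(i) ≡ 2^k i (mod 2^p - 1)` for `0 < i < 2^p - 1`, `α(0) = 0`,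
`α(2^p-1) = 2^p-1`. -/
def alphaIdx (p k : ℕ) (i : Fin (2 ^ p)) : Fin (2 ^ p) :=
  if h : (i : ℕ) = 2 ^ p - 1 then i
  else ⟨(2 ^ k * (i : ℕ)) % (2 ^ p - 1), by
    have h1 : 0 < 2 ^ p := Nat.two_pow_pos p
    have h2 : (i : ℕ) < 2 ^ p := i.isLt
    have h3 : 0 < 2 ^ p - 1 := by omega
    have h4 := Nat.mod_lt (2 ^ k * (i : ℕ)) h3
    omega⟩

/-- The twisted trace `tr^{(k)}(A) = Σ_i A_{i+1, α(i)+1}`. -/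
def trk (p k : ℕ) (A : Matrix (Fin (2 ^ p)) (Fin (2 ^ p)) ℕ) : ℕ :=
  ∑ i, A i (alphaIdx p k i)

section AuxProof

/-- Column suitable-connectedness for a single column of tiles. -/
def colSC {m : ℕ} (c : Fin m → Fin 11) : Prop :=
  ∀ (i : Fin m) (h : i.val + 1 < m), cpB (c i) = cpT (c ⟨i.val + 1, h⟩)

instance {m : ℕ} : DecidablePred (colSC (m := m)) := fun _ =>
  inferInstanceAs (Decidable (∀ _ _, _ = _))

/-- Predicate used for counting column mosaics. -/
def colP (m : ℕ) (bS tS : Bool) (A B : Fin (m + 1) → Bool) (c : Fin (m + 1) → Fin 11) : Prop :=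
  colSC c ∧ (∀ i, cpL (c i) = A i) ∧ (∀ i, cpR (c i) = B i) ∧
    cpB (c (Fin.last m)) = bS ∧ cpT (c 0) = tS

instance (m : ℕ) (bS tS : Bool) (A B : Fin (m + 1) → Bool) :
    DecidablePred (colP m bS tS A B) := fun _ =>
  inferInstanceAs (Decidable (_ ∧ _))

/-- The number of suitably connected columns with prescribed boundary data. -/
def cnt (m : ℕ) (bS tS : Bool) (A B : Fin (m + 1) → Bool) : ℕ :=
  (Finset.univ.filter (colP m bS tS A B)).card

lemma cnt_eq_card (m : ℕ) (bS tS : Bool) (A B : Fin (m + 1) → Bool) :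
    cnt m bS tS A B = Nat.card {c : Fin (m + 1) → Fin 11 // colP m bS tS A B c} := by
  rw [Nat.card_eq_fintype_card, Fintype.card_subtype, cnt]

lemma cnt_zero (bS tS x y : Bool) :
    cnt 0 bS tS (fun _ => x) (fun _ => y) =
      (Finset.univ.filter
        (fun t : Fin 11 => cpL t = x ∧ cpR t = y ∧ cpB t = bS ∧ cpT t = tS)).card := by
  rw [cnt]
  refine Finset.card_nbij' (fun c => c 0) (fun t _ => t) ?_ ?_ ?_ ?_
  · intro c hc
    simp only [Finset.mem_coe, Finset.mem_filter, Finset.mem_univ, true_and] at hc ⊢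
    obtain ⟨-, hL, hR, hB, hT⟩ := hc
    have h0 : Fin.last 0 = (0 : Fin 1) := by apply Fin.ext; simp
    rw [h0] at hB
    exact ⟨hL 0, hR 0, hB, hT⟩
  · intro t ht
    simp only [Finset.mem_coe, Finset.mem_filter, Finset.mem_univ, true_and] at ht ⊢
    obtain ⟨hL, hR, hB, hT⟩ := ht
    refine ⟨fun i h => by omega, fun i => hL, fun i => hR, hB, hT⟩
  · intro c _
    funext i
    exact congrArg c (Fin.ext (by omega))
  · intro t _
    rfl

/-- Extend a column by one tile at the bottom. -/
def ext1 {m : ℕ} (g : Fin (m + 1) → Fin 11) (t : Fin 11) : Fin (m + 2) → Fin 11 :=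
  fun i => if h : i.val < m + 1 then g ⟨i.val, h⟩ else t

lemma cnt_succ (m : ℕ) (bS tS : Bool) (A B : Fin (m + 2) → Bool) :
    cnt (m + 1) bS tS A B = ∑ t : Fin 11,
      (if cpL t = A (Fin.last (m + 1)) ∧ cpR t = B (Fin.last (m + 1)) ∧ cpB t = bS then
        cnt m (cpT t) tS (fun i => A i.castSucc) (fun i => B i.castSucc) else 0) := by
  rw [cnt, Finset.card_eq_sum_card_fiberwise
    (f := fun c => c (Fin.last (m + 1))) (t := Finset.univ) (fun _ _ => Finset.mem_univ _)]
  refine Finset.sum_congr rfl (fun t _ => ?_)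
  by_cases hC : cpL t = A (Fin.last (m + 1)) ∧ cpR t = B (Fin.last (m + 1)) ∧ cpB t = bS
  · rw [if_pos hC, cnt]
    refine (Finset.card_nbij' (fun c => fun i => c i.castSucc) (fun g => ext1 g t)
      ?_ ?_ ?_ ?_)
    · -- restriction lands in the small filter
      intro c hc
      simp only [Finset.mem_coe, Finset.mem_filter, Finset.mem_univ, true_and] at hc ⊢
      obtain ⟨⟨hsc, hL, hR, hB, hT⟩, hlast⟩ := hc
      refine ⟨?_, fun i => hL i.castSucc, fun i => hR i.castSucc, ?_, ?_⟩
      · intro i h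
        have h2 : (i.castSucc : Fin (m + 2)).val + 1 < m + 2 := by
          simp only [Fin.coe_castSucc]; omega
        have := hsc i.castSucc h2
        convert this using 3 <;> apply Fin.ext <;> simp
      · have h2 : ((Fin.last m).castSucc : Fin (m + 2)).val + 1 < m + 2 := by
          simp [Fin.coe_castSucc]
        have := hsc (Fin.last m).castSucc h2
        rw [this]
        have he : (⟨((Fin.last m).castSucc : Fin (m + 2)).val + 1, h2⟩ : Fin (m + 2)) =
            Fin.last (m + 1) := by apply Fin.ext; simp
        rw [he, hlast]
      · have h0 : ((0 : Fin (m + 1)).castSucc : Fin (m + 2)) = 0 := by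
          apply Fin.ext; simp
        show cpT (c ((0 : Fin (m + 1)).castSucc)) = tS
        rw [h0]; exact hT
    · -- ext1 lands in the big filter
      intro g hg
      simp only [Finset.mem_coe, Finset.mem_filter, Finset.mem_univ, true_and] at hg ⊢
      obtain ⟨hsc, hL, hR, hB, hT⟩ := hg
      have hlast : ext1 g t (Fin.last (m + 1)) = t := by
        rw [ext1]; exact dif_neg (by simp)
      refine ⟨⟨?_, ?_, ?_, ?_, ?_⟩, hlast⟩
      · intro i h
        by_cases h1 : i.val + 1 < m + 1
        · have hi : i.val < m + 1 := by omega
          have e1 : ext1 g t i = g ⟨i.val, hi⟩ := dif_pos hi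
          have e2 : ext1 g t ⟨i.val + 1, h⟩ = g ⟨i.val + 1, h1⟩ := dif_pos h1
          rw [e1, e2]
          exact hsc ⟨i.val, hi⟩ h1
        · have hi : i.val = m := by omega
          have hi' : i.val < m + 1 := by omega
          have e1 : ext1 g t i = g ⟨i.val, hi'⟩ := dif_pos hi'
          have e2 : ext1 g t ⟨i.val + 1, h⟩ = t := dif_neg (show ¬(i.val + 1 < m + 1) by omega)
          rw [e1, e2]
          have hgl : (⟨i.val, hi'⟩ : Fin (m + 1)) = Fin.last m := by
            apply Fin.ext; simpa using hi
          rw [hgl, hB]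
      · intro i
        by_cases hi : i.val < m + 1
        · have e1 : ext1 g t i = g ⟨i.val, hi⟩ := dif_pos hi
          rw [e1]
          exact (hL ⟨i.val, hi⟩).trans (congrArg A (by apply Fin.ext; simp))
        · have e1 : ext1 g t i = t := dif_neg hi
          rw [e1]
          have : i = Fin.last (m + 1) := by apply Fin.ext; simp; omega
          rw [this]; exact hC.1
      · intro i
        by_cases hi : i.val < m + 1
        · have e1 : ext1 g t i = g ⟨i.val, hi⟩ := dif_pos hi
          rw [e1]
          exact (hR ⟨i.val, hi⟩).trans (congrArg B (by apply Fin.ext; simp))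
        · have e1 : ext1 g t i = t := dif_neg hi
          rw [e1]
          have : i = Fin.last (m + 1) := by apply Fin.ext; simp; omega
          rw [this]; exact hC.2.1
      · rw [hlast]; exact hC.2.2
      · have e1 : ext1 g t 0 = g ⟨0, by omega⟩ := dif_pos (by simp)
        rw [e1]
        have h0 : (⟨0, by omega⟩ : Fin (m + 1)) = 0 := by apply Fin.ext; simp
        rw [h0]; exact hT
    · -- left inverse
      intro c hc
      simp only [Finset.mem_coe, Finset.mem_filter, Finset.mem_univ, true_and] at hc
      funext i
      show ext1 (fun j => c j.castSucc) t i = c i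
      by_cases hi : i.val < m + 1
      · have e1 : ext1 (fun j => c j.castSucc) t i = c (⟨i.val, hi⟩ : Fin (m + 1)).castSucc :=
          dif_pos hi
        rw [e1]
        exact congrArg c (by apply Fin.ext; simp)
      · have e1 : ext1 (fun j => c j.castSucc) t i = t := dif_neg hi
        rw [e1]
        have : i = Fin.last (m + 1) := by apply Fin.ext; simp; omega
        rw [this, hc.2]
    · -- right inverse
      intro g _
      funext i
      show ext1 g t i.castSucc = g i
      have e1 : ext1 g t i.castSucc = g ⟨(i.castSucc : Fin (m + 2)).val, i.isLt⟩ :=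
        dif_pos i.isLt
      rw [e1]
      exact congrArg g (by apply Fin.ext; simp)
  · rw [if_neg hC]
    rw [Finset.card_eq_zero, Finset.filter_eq_empty_iff]
    intro c hc hlast
    simp only [Finset.mem_filter, Finset.mem_univ, true_and] at hc
    obtain ⟨-, hL, hR, hB, -⟩ := hc
    exact hC ⟨hlast ▸ hL (Fin.last (m + 1)), hlast ▸ hR (Fin.last (m + 1)), hlast ▸ hB⟩

end AuxProof

lemma matsPM_eq_cnt (m : ℕ) (a b : ℕ) :
    matsPM (m + 1) a b =
      (cnt m false false (fun i : Fin (m + 1) => a.testBit i) (fun i => b.testBit i),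
       cnt m false true (fun i : Fin (m + 1) => a.testBit i) (fun i => b.testBit i),
       cnt m true true (fun i : Fin (m + 1) => a.testBit i) (fun i => b.testBit i),
       cnt m true false (fun i : Fin (m + 1) => a.testBit i) (fun i => b.testBit i)) := by
  induction m generalizing a b with
  | zero =>
    have hA : (fun i : Fin 1 => a.testBit i) = (fun _ : Fin 1 => a.testBit 0) :=
      funext fun i => by congr 1; omega
    have hB : (fun i : Fin 1 => b.testBit i) = (fun _ : Fin 1 => b.testBit 0) :=
      funext fun i => by congr 1; omega
    rw [hA, hB]
    cases hx : a.testBit 0 <;> cases hy : b.testBit 0 <;>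
      [skip; skip; skip; skip] <;>
      · have hx' := (Nat.testBit_eq_decide_div_mod_eq (x := a) (i := 0)).symm.trans hx
        have hy' := (Nat.testBit_eq_decide_div_mod_eq (x := b) (i := 0)).symm.trans hy
        simp only [decide_eq_false_iff_not, decide_eq_true_eq] at hx' hy'
        have hx2 : a / 2 ^ 0 % 2 = if a.testBit 0 then 1 else 0 := by
          rw [hx]; simp; omega
        have hy2 : b / 2 ^ 0 % 2 = if b.testBit 0 then 1 else 0 := by
          rw [hy]; simp; omega
        rw [hx] at hx2; rw [hy] at hy2
        simp only [matsPM, hx2, hy2, cnt_zero]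
        decide
  | succ k ih =>
    have hv : matsPM (k + 1) (a % 2 ^ (k + 1)) (b % 2 ^ (k + 1)) =
        (cnt k false false (fun i : Fin (k + 1) => a.testBit i) (fun i => b.testBit i),
         cnt k false true (fun i : Fin (k + 1) => a.testBit i) (fun i => b.testBit i),
         cnt k true true (fun i : Fin (k + 1) => a.testBit i) (fun i => b.testBit i),
         cnt k true false (fun i : Fin (k + 1) => a.testBit i) (fun i => b.testBit i)) := by
      rw [ih]
      have hA : (fun i : Fin (k + 1) => (a % 2 ^ (k + 1)).testBit i) =
          (fun i : Fin (k + 1) => a.testBit i) := funext fun i => by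
        rw [Nat.testBit_mod_two_pow]
        simp [i.isLt]
      have hB : (fun i : Fin (k + 1) => (b % 2 ^ (k + 1)).testBit i) =
          (fun i : Fin (k + 1) => b.testBit i) := funext fun i => by
        rw [Nat.testBit_mod_two_pow]
        simp [i.isLt]
      rw [hA, hB]
    have hstep : ∀ bS tS : Bool,
        cnt (k + 1) bS tS (fun i : Fin (k + 2) => a.testBit i) (fun i => b.testBit i) =
          ∑ t : Fin 11,
            (if cpL t = a.testBit (k + 1) ∧ cpR t = b.testBit (k + 1) ∧ cpB t = bS then
              cnt k (cpT t) tS (fun i : Fin (k + 1) => a.testBit i) (fun i => b.testBit i)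
            else 0) := by
      intro bS tS
      rw [cnt_succ]
      simp only [Fin.val_last, Fin.coe_castSucc]
    have hx2 : a / 2 ^ (k + 1) % 2 = if a.testBit (k + 1) then 1 else 0 := by
      have := (Nat.testBit_eq_decide_div_mod_eq (x := a) (i := k + 1))
      rcases h : a.testBit (k + 1) <;> rw [h] at this <;>
        simp only [decide_eq_false_iff_not, decide_eq_true_eq,
          eq_comm (a := false), eq_comm (a := true)] at this <;> simp <;> omega
    have hy2 : b / 2 ^ (k + 1) % 2 = if b.testBit (k + 1) then 1 else 0 := by
      have := (Nat.testBit_eq_decide_div_mod_eq (x := b) (i := k + 1))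
      rcases h : b.testBit (k + 1) <;> rw [h] at this <;>
        simp only [decide_eq_false_iff_not, decide_eq_true_eq,
          eq_comm (a := false), eq_comm (a := true)] at this <;> simp <;> omega
    have main : ∀ xb yb : Bool, a.testBit (k + 1) = xb → b.testBit (k + 1) = yb →
        a / 2 ^ (k + 1) % 2 = (if xb then 1 else 0) →
        b / 2 ^ (k + 1) % 2 = (if yb then 1 else 0) → matsPM (k + 1 + 1) a b =
          (cnt (k + 1) false false (fun i : Fin (k + 2) => a.testBit i) (fun i => b.testBit i),
           cnt (k + 1) false true (fun i : Fin (k + 2) => a.testBit i) (fun i => b.testBit i),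
           cnt (k + 1) true true (fun i : Fin (k + 2) => a.testBit i) (fun i => b.testBit i),
           cnt (k + 1) true false (fun i : Fin (k + 2) => a.testBit i) (fun i => b.testBit i)) := by
      intro xb yb hx hy hx2 hy2
      conv_lhs => rw [matsPM]
      rw [hv]
      simp only [hstep, hx, hy, hx2, hy2, Fin.sum_univ_succ, Finset.univ_eq_empty,
        Finset.sum_empty, cpL, cpR, cpT, cpB, Matrix.cons_val_zero, Matrix.cons_val_one,
        Matrix.head_cons, Matrix.cons_val_succ]
      cases xb <;> cases yb <;> norm_num <;> ring_nf <;> simp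
    cases hx : a.testBit (k + 1) <;> cases hy : b.testBit (k + 1) <;>
      rw [hx] at hx2 <;> rw [hy] at hy2 <;>
      exact main _ _ hx hy hx2 hy2

lemma card_mosaic_eq_cnt (k : ℕ) (hm : 0 < k + 1) (a b : Fin (2 ^ (k + 1))) (bs ts : Bool) :
    Nat.card {M : Mosaic (k + 1) 1 // SuitablyConnected M ∧
      lState Nat.one_pos M = stateOf a ∧ rState Nat.one_pos M = stateOf b ∧
      bState hm M 0 = bs ∧ tState hm M 0 = ts} =
    cnt k bs ts (fun i => (a : ℕ).testBit i) (fun i => (b : ℕ).testBit i) := by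
  have h01 : (⟨0, Nat.one_pos⟩ : Fin 1) = 0 := by apply Fin.ext; simp
  have h01' : (⟨1 - 1, Nat.sub_lt Nat.one_pos Nat.one_pos⟩ : Fin 1) = 0 := by apply Fin.ext; simp
  have hlast : (⟨k + 1 - 1, Nat.sub_lt hm Nat.one_pos⟩ : Fin (k + 1)) = Fin.last k := by
    apply Fin.ext; simp
  have h0m : (⟨0, hm⟩ : Fin (k + 1)) = 0 := by apply Fin.ext; simp
  rw [cnt_eq_card]
  refine Nat.card_congr ⟨fun M => ⟨fun i => M.1 i 0, ?_⟩, fun c => ⟨fun i _ => c.1 i, ?_⟩, ?_, ?_⟩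
  · obtain ⟨M, hsc, hl, hr, hb, ht⟩ := M
    refine ⟨fun i h => hsc.2 i h 0, fun i => ?_, fun i => ?_, ?_, ?_⟩
    · show cpL (M i 0) = stateOf a i
      rw [← h01]
      exact congrFun hl i
    · show cpR (M i 0) = stateOf b i
      rw [← h01']
      exact congrFun hr i
    · show cpB (M (Fin.last k) 0) = bs
      rw [← hlast]
      exact hb
    · show cpT (M 0 0) = ts
      rw [← h0m]
      exact ht
  · obtain ⟨c, hsc, hL, hR, hB, hT⟩ := c
    refine ⟨⟨fun i j h => absurd h (by omega), fun i h j => hsc i h⟩, ?_, ?_, ?_, ?_⟩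
    · funext i; exact hL i
    · funext i; exact hR i
    · show cpB (c (⟨k + 1 - 1, Nat.sub_lt hm Nat.one_pos⟩ : Fin (k + 1))) = bs
      rw [hlast]; exact hB
    · show cpT (c (⟨0, hm⟩ : Fin (k + 1))) = ts
      rw [h0m]; exact hT
  · rintro ⟨M, hM⟩
    apply Subtype.ext
    funext i j
    exact congrArg (M i) (Fin.ext (by omega))
  · rintro ⟨c, hc⟩
    rfl

/-- For every positive integer `m`, the matrices `X_m^+, X_m^-, O_m^+, O_m^-`
are exactly the state matrices of suitably connected `(m,1)`-mosaics, split according to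
their `(b-state, t-state)` being `(x,x)`, `(x,o)`, `(o,o)`, `(o,x)` respectively. -/
theorem column_state_matrices (m : ℕ) (hm : 0 < m) (a b : Fin (2 ^ m)) :
    Xplus m a b = Nat.card {M : Mosaic m 1 // SuitablyConnected M ∧
      lState Nat.one_pos M = stateOf a ∧ rState Nat.one_pos M = stateOf b ∧
      bState hm M 0 = false ∧ tState hm M 0 = false} ∧
    Xminus m a b = Nat.card {M : Mosaic m 1 // SuitablyConnected M ∧
      lState Nat.one_pos M = stateOf a ∧ rState Nat.one_pos M = stateOf b ∧
      bState hm M 0 = false ∧ tState hm M 0 = true} ∧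
    Oplus m a b = Nat.card {M : Mosaic m 1 // SuitablyConnected M ∧
      lState Nat.one_pos M = stateOf a ∧ rState Nat.one_pos M = stateOf b ∧
      bState hm M 0 = true ∧ tState hm M 0 = true} ∧
    Ominus m a b = Nat.card {M : Mosaic m 1 // SuitablyConnected M ∧
      lState Nat.one_pos M = stateOf a ∧ rState Nat.one_pos M = stateOf b ∧
      bState hm M 0 = true ∧ tState hm M 0 = false} := by
  obtain ⟨k, rfl⟩ : ∃ k, m = k + 1 := ⟨m - 1, by omega⟩
  have key := matsPM_eq_cnt k (a : ℕ) (b : ℕ)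
  refine ⟨?_, ?_, ?_, ?_⟩
  · rw [card_mosaic_eq_cnt k hm a b false false]
    show (matsPM (k + 1) (a : ℕ) (b : ℕ)).1 = _
    rw [key]
  · rw [card_mosaic_eq_cnt k hm a b false true]
    show (matsPM (k + 1) (a : ℕ) (b : ℕ)).2.1 = _
    rw [key]
  · rw [card_mosaic_eq_cnt k hm a b true true]
    show (matsPM (k + 1) (a : ℕ) (b : ℕ)).2.2.1 = _
    rw [key]
  · rw [card_mosaic_eq_cnt k hm a b true false]
    show (matsPM (k + 1) (a : ℕ) (b : ℕ)).2.2.2 = _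
    rw [key]
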